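/- Two commutative quantales are Morita equivalent if and only if they are isomorphic as quantales. -/

import Mathlib

open CategoryTheory Set

universe u v w

class UQuantale (A : Type u) extends CompleteLattice A, Monoid A where
  mul_sSup : ∀ (a : A) (s : Set A), a * sSup s = ⨆ b ∈ s, a * b
  sSup_mul : ∀ (s : Set A) (b : A), sSup s * b = ⨆ a ∈ s, a * b

namespace UQuantale
variable {A : Type u} [UQuantale A]

theorem mul_iSup {ι : Sort w} (a : A) (f : ι → A) : a * (⨆ i, f i) = ⨆ i, a * f i := by
  rw [iSup, mul_sSup]; exact iSup_range

theorem iSup_mul {ι : Sort w} (f : ι → A) (b : A) : (⨆ i, f i) * b = ⨆ i, f i * b := by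
  rw [iSup, sSup_mul]; exact iSup_range

theorem mul_bot (a : A) : a * (⊥ : A) = ⊥ := by
  have := mul_sSup a (∅ : Set A); simpa using this

theorem bot_mul (a : A) : (⊥ : A) * a = ⊥ := by
  have := sSup_mul (∅ : Set A) a; simpa using this

end UQuantale

structure QMod (A : Type u) [UQuantale A] : Type (max u (v + 1)) where
  carrier : Type v
  [latt : CompleteLattice carrier]
  act : carrier → A → carrier
  act_one : ∀ m, act m 1 = m
  act_mul : ∀ m a b, act m (a * b) = act (act m a) b
  sSup_act : ∀ (s : Set carrier) (a : A), act (sSup s) a = ⨆ m ∈ s, act m a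
  act_sSup : ∀ (m : carrier) (s : Set A), act m (sSup s) = ⨆ a ∈ s, act m a

attribute [instance] QMod.latt

namespace QMod

variable {A : Type u} [UQuantale A]

def IsHom (M N : QMod.{u, v} A) (f : M.carrier → N.carrier) : Prop :=
  (∀ s : Set M.carrier, f (sSup s) = ⨆ m ∈ s, f m) ∧
  (∀ m a, f (M.act m a) = N.act (f m) a)

theorem isHom_id (M : QMod.{u, v} A) : IsHom M M id :=
  ⟨fun s => by simp [sSup_eq_iSup], fun _ _ => rfl⟩

theorem isHom_comp {M N P : QMod.{u, v} A} {f : M.carrier → N.carrier}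
    {g : N.carrier → P.carrier} (hf : IsHom M N f) (hg : IsHom N P g) :
    IsHom M P (g ∘ f) := by
  constructor
  · intro s
    show g (f (sSup s)) = _
    rw [hf.1 s, ← sSup_image, hg.1, iSup_image]
    rfl
  · intro m a
    show g (f (M.act m a)) = _
    rw [hf.2, hg.2]
    rfl

instance : Category.{v} (QMod.{u, v} A) where
  Hom M N := { f : M.carrier → N.carrier // IsHom M N f }
  id M := ⟨id, isHom_id M⟩
  comp f g := ⟨g.1 ∘ f.1, isHom_comp f.2 g.2⟩
  id_comp _ := Subtype.ext rfl
  comp_id _ := Subtype.ext rfl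
  assoc _ _ _ := Subtype.ext rfl

theorem iSup_act (M : QMod.{u, v} A) {ι : Sort w} (g : ι → M.carrier) (a : A) :
    M.act (⨆ i, g i) a = ⨆ i, M.act (g i) a := by
  rw [iSup, M.sSup_act]; exact iSup_range

theorem act_iSup (M : QMod.{u, v} A) (m : M.carrier) {ι : Sort w} (g : ι → A) :
    M.act m (⨆ i, g i) = ⨆ i, M.act m (g i) := by
  rw [iSup, M.act_sSup]; exact iSup_range

theorem hom_iSup {M N : QMod.{u, v} A} (f : M ⟶ N) {ι : Sort w} (g : ι → M.carrier) :
    f.1 (⨆ i, g i) = ⨆ i, f.1 (g i) := by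
  rw [iSup, f.2.1, iSup_range]

/-- The pointwise supremum of a set of module morphisms is a module morphism. -/
theorem isHom_biSup {M N : QMod.{u, v} A} (s : Set (M ⟶ N)) :
    IsHom M N (fun m => ⨆ f ∈ s, f.1 m) := by
  constructor
  · intro t
    calc (⨆ f ∈ s, f.1 (sSup t)) = ⨆ f ∈ s, ⨆ m ∈ t, f.1 m :=
          iSup_congr fun f => iSup_congr fun _ => f.2.1 t
      _ = ⨆ m ∈ t, ⨆ f ∈ s, f.1 m := iSup₂_comm _
  · intro m a
    simp only [iSup_act]
    exact iSup_congr fun f => iSup_congr fun _ => f.2.2 m a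

instance homSupSet (M N : QMod.{u, v} A) : SupSet (M ⟶ N) :=
  ⟨fun s => ⟨fun m => ⨆ f ∈ s, f.1 m, isHom_biSup s⟩⟩

instance homPartialOrder (M N : QMod.{u, v} A) : PartialOrder (M ⟶ N) :=
  inferInstanceAs (PartialOrder { f : M.carrier → N.carrier // IsHom M N f })

theorem hom_le_iff {M N : QMod.{u, v} A} {f g : M ⟶ N} : f ≤ g ↔ ∀ m, f.1 m ≤ g.1 m :=
  Iff.rfl

instance homCompleteLattice (M N : QMod.{u, v} A) : CompleteLattice (M ⟶ N) :=
  completeLatticeOfSup _ (fun s => by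
    constructor
    · intro f hf
      intro m
      exact le_iSup₂ (f := fun (f : M ⟶ N) (_ : f ∈ s) => f.1 m) f hf
    · intro g hg
      intro m
      exact iSup₂_le fun f hf => hg hf m)

theorem sSup_hom_apply {M N : QMod.{u, v} A} (s : Set (M ⟶ N)) (m : M.carrier) :
    (sSup s).1 m = ⨆ f ∈ s, f.1 m := rfl

theorem iSup_hom_apply {M N : QMod.{u, v} A} {ι : Sort w} (F : ι → (M ⟶ N)) (m : M.carrier) :
    (⨆ i, F i).1 m = ⨆ i, (F i).1 m := by
  rw [iSup]
  show ⨆ f ∈ range F, f.1 m = _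
  exact iSup_range

instance endMonoid (M : QMod.{u, v} A) : Monoid (M ⟶ M) where
  mul f g := g ≫ f
  one := 𝟙 M
  mul_assoc _ _ _ := Subtype.ext rfl
  one_mul _ := Subtype.ext rfl
  mul_one _ := Subtype.ext rfl

theorem end_mul_apply {M : QMod.{u, v} A} (f g : M ⟶ M) (m : M.carrier) :
    (f * g).1 m = f.1 (g.1 m) := rfl

/-- The endomorphism quantale `Hom_A(M,M)` of a right `A`-module `M`:
multiplication is composition, the unit is the identity, suprema are pointwise. -/
instance endQuantale (M : QMod.{u, v} A) : UQuantale (M ⟶ M) :=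
  { homCompleteLattice M M, endMonoid M with
    mul_sSup := fun a s => by
      apply Subtype.ext
      funext m
      show a.1 ((sSup s).1 m) = (⨆ b ∈ s, a * b).1 m
      rw [sSup_hom_apply]
      simp only [hom_iSup, iSup_hom_apply]
      rfl
    sSup_mul := fun s b => by
      apply Subtype.ext
      funext m
      show (sSup s).1 (b.1 m) = (⨆ a ∈ s, a * b).1 m
      rw [sSup_hom_apply]
      simp only [iSup_hom_apply]
      rfl }

/-- `Q` is a generator of the category of right `A`-modules:
the hom functor out of `Q` is faithful. -/
def IsGenerator {A : Type u} [UQuantale A] (Q : QMod.{u, v} A) : Prop :=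
  ∀ {M N : QMod.{u, v} A} (f g : M ⟶ N), (∀ h : Q ⟶ M, h ≫ f = h ≫ g) → f = g

/-- `Q` is projective: the hom functor out of `Q` sends epimorphisms to surjections. -/
def IsProjective {A : Type u} [UQuantale A] (Q : QMod.{u, v} A) : Prop :=
  ∀ {M N : QMod.{u, v} A} (p : M ⟶ N), Epi p → ∀ h : Q ⟶ N, ∃ k : Q ⟶ M, k ≫ p = h

end QMod

def MoritaEquivalent (A B : Type u) [UQuantale A] [UQuantale B] : Prop :=
  Nonempty (QMod.{u, u} A ≌ QMod.{u, u} B)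

def IsQuantaleIso {A : Type u} {B : Type v} [UQuantale A] [UQuantale B] (f : A → B) : Prop :=
  Function.Bijective f ∧ (∀ s : Set A, f (sSup s) = ⨆ a ∈ s, f a) ∧
    f 1 = 1 ∧ ∀ a a' : A, f (a * a') = f a * f a'

section Aux
open QMod

variable {A : Type u} [UQuantale A]

theorem QMod.hom_bot {M N : QMod.{u, u} A} (f : M ⟶ N) : f.1 ⊥ = ⊥ := by
  have := f.2.1 (∅ : Set M.carrier); simpa using this

theorem QMod.bot_act (M : QMod.{u, u} A) (a : A) : M.act ⊥ a = ⊥ := by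
  have := M.sSup_act (∅ : Set M.carrier) a; simpa using this

/-- The zero morphism. -/
def QMod.zeroHom (M N : QMod.{u, u} A) : M ⟶ N :=
  ⟨fun _ => ⊥, fun s => by simp, fun m a => (QMod.bot_act N a).symm⟩

theorem QMod.comp_zeroHom {M N P : QMod.{u, u} A} (f : M ⟶ N) :
    f ≫ QMod.zeroHom N P = QMod.zeroHom M P := Subtype.ext rfl

theorem QMod.zeroHom_comp {M N P : QMod.{u, u} A} (f : N ⟶ P) :
    QMod.zeroHom M N ≫ f = QMod.zeroHom M P :=
  Subtype.ext (funext fun _ => QMod.hom_bot f)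

/-- Pre- and post-composition preserve suprema of homs. -/
theorem QMod.comp_iSup {M N P : QMod.{u, u} A} {ι : Sort w} (h : M ⟶ N) (k : ι → (N ⟶ P)) :
    h ≫ (⨆ i, k i) = ⨆ i, h ≫ k i := by
  apply Subtype.ext; funext m
  show (⨆ i, k i).1 (h.1 m) = _
  rw [QMod.iSup_hom_apply, QMod.iSup_hom_apply]
  rfl

theorem QMod.iSup_comp {M N P : QMod.{u, u} A} {ι : Sort w} (k : ι → (M ⟶ N)) (h : N ⟶ P) :
    (⨆ i, k i) ≫ h = ⨆ i, k i ≫ h := by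
  apply Subtype.ext; funext m
  show h.1 ((⨆ i, k i).1 m) = _
  rw [QMod.iSup_hom_apply, QMod.hom_iSup, QMod.iSup_hom_apply]
  rfl

/-- The zero module. -/
def QMod.ZMod (A : Type u) [UQuantale A] : QMod.{u, u} A where
  carrier := PUnit.{u + 1}
  act _ _ := PUnit.unit
  act_one _ := rfl
  act_mul _ _ _ := rfl
  sSup_act _ _ := Subsingleton.elim _ _
  act_sSup _ _ := Subsingleton.elim _ _

theorem QMod.zhom_unique {X : QMod.{u, u} A} (w w' : QMod.ZMod A ⟶ X) : w = w' := by
  haveI : Subsingleton ((QMod.ZMod A).carrier) := ⟨fun _ _ => rfl⟩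
  apply Subtype.ext; funext m
  have hm : m = (⊥ : (QMod.ZMod A).carrier) := Subsingleton.elim _ _
  rw [hm, QMod.hom_bot, QMod.hom_bot]

theorem QMod.zeroHom_factor (M N : QMod.{u, u} A) :
    QMod.zeroHom M N = QMod.zeroHom M (QMod.ZMod A) ≫ QMod.zeroHom (QMod.ZMod A) N :=
  Subtype.ext rfl

end Aux
section Biproduct
open QMod

theorem pi_sSup_apply {α : Type*} {κ : Type*} [CompleteLattice α]
    (s : Set (κ → α)) (i : κ) : sSup s i = ⨆ v ∈ s, v i := by
  rw [sSup_apply, iSup_subtype']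

theorem pi_biSup_apply {α : Type*} {κ : Type*} {β : Type*} [CompleteLattice α]
    (s : Set β) (f : β → κ → α) (i : κ) : (⨆ m ∈ s, f m) i = ⨆ m ∈ s, f m i := by
  simp only [iSup_apply]

variable {A : Type u} [UQuantale A] {ι : Type u}

/-- The product/coproduct (biproduct) of `ι` copies of a module. -/
def QMod.PMod (ι : Type u) (M : QMod.{u, u} A) : QMod.{u, u} A where
  carrier := ι → M.carrier
  act v a := fun i => M.act (v i) a
  act_one v := funext fun i => M.act_one _
  act_mul v a b := funext fun i => M.act_mul _ _ _
  sSup_act s a := funext fun i => by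
    show M.act (sSup s i) a = (⨆ m ∈ s, fun j => M.act (m j) a) i
    rw [pi_sSup_apply, pi_biSup_apply]
    simp only [QMod.iSup_act]
  act_sSup v s := funext fun i => by
    show M.act (v i) (sSup s) = (⨆ a ∈ s, fun j => M.act (v j) a) i
    rw [pi_biSup_apply]
    exact M.act_sSup _ s

/-- Coproduct injections. -/
noncomputable def QMod.inj (M : QMod.{u, u} A) (i : ι) : M ⟶ QMod.PMod ι M := by
  classical
  refine ⟨fun m j => if j = i then m else ⊥, fun s => ?_, fun m a => ?_⟩
  · funext j
    show (if j = i then sSup s else ⊥) = (⨆ m ∈ s, fun k => if k = i then m else ⊥) j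
    rw [pi_biSup_apply]
    by_cases h : j = i
    · simp only [if_pos h, sSup_eq_iSup]
    · simp only [if_neg h, iSup_bot]
  · funext j
    show (if j = i then M.act m a else ⊥) = M.act (if j = i then m else ⊥) a
    by_cases h : j = i
    · simp [h]
    · simp [h, QMod.bot_act]

/-- Product projections. -/
def QMod.proj (M : QMod.{u, u} A) (i : ι) : QMod.PMod ι M ⟶ M := by
  refine ⟨fun v => v i, fun s => ?_, fun v a => rfl⟩
  show sSup s i = ⨆ v ∈ s, v i
  exact pi_sSup_apply s i

/-- Pairing into the product. -/
def QMod.pair {X M : QMod.{u, u} A} (u : ι → (X ⟶ M)) : X ⟶ QMod.PMod ι M := by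
  refine ⟨fun x i => (u i).1 x, fun s => ?_, fun x a => ?_⟩
  · funext i
    show (u i).1 (sSup s) = (⨆ x ∈ s, fun j => (u j).1 x) i
    rw [pi_biSup_apply]
    exact (u i).2.1 s
  · funext i
    exact (u i).2.2 x a

/-- Copairing out of the coproduct. -/
noncomputable def QMod.copair {M X : QMod.{u, u} A} (u : ι → (M ⟶ X)) :
    QMod.PMod ι M ⟶ X := by
  refine ⟨fun v => ⨆ i, (u i).1 (v i), fun s => ?_, fun v a => ?_⟩
  · show (⨆ i, (u i).1 (sSup s i)) = ⨆ v ∈ s, ⨆ i, (u i).1 (v i)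
    rw [iSup_subtype' (f := fun v (_ : v ∈ s) => ⨆ i, (u i).1 (v i))]
    calc (⨆ i, (u i).1 (sSup s i))
        = ⨆ i, ⨆ v : s, (u i).1 (v.1 i) := by
          refine iSup_congr fun i => ?_
          erw [sSup_apply, QMod.hom_iSup]
          rfl
      _ = ⨆ v : s, ⨆ i, (u i).1 (v.1 i) := iSup_comm
  · show (⨆ i, (u i).1 (M.act (v i) a)) = X.act (⨆ i, (u i).1 (v i)) a
    rw [QMod.iSup_act]
    exact iSup_congr fun i => (u i).2.2 _ _

theorem QMod.inj_copair {M X : QMod.{u, u} A} (u : ι → (M ⟶ X)) (i : ι) :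
    QMod.inj M i ≫ QMod.copair u = u i := by
  classical
  apply Subtype.ext; funext m
  show (⨆ j, (u j).1 (if j = i then m else ⊥)) = (u i).1 m
  apply le_antisymm
  · refine iSup_le fun j => ?_
    by_cases h : j = i
    · subst h; rw [if_pos rfl]
    · rw [if_neg h, QMod.hom_bot]; exact bot_le
  · have := le_iSup (fun j => (u j).1 (if j = i then m else ⊥)) i
    simpa using this

theorem QMod.pair_proj {X M : QMod.{u, u} A} (u : ι → (X ⟶ M)) (i : ι) :
    QMod.pair u ≫ QMod.proj M i = u i := Subtype.ext rfl

theorem QMod.pair_ext {X M : QMod.{u, u} A} (w : X ⟶ QMod.PMod ι M) :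
    w = QMod.pair (fun i => w ≫ QMod.proj M i) := Subtype.ext rfl

theorem QMod.decomp {M : QMod.{u, u} A} (v : (QMod.PMod ι M).carrier) :
    v = ⨆ i, (QMod.inj M i).1 (v i) := by
  classical
  funext j
  show v j = (⨆ i, (QMod.inj M i).1 (v i)) j
  erw [iSup_apply]
  show v j = ⨆ i, (if j = i then v i else ⊥)
  apply le_antisymm
  · have := le_iSup (fun i => if j = i then v i else (⊥ : M.carrier)) j
    simpa using this
  · refine iSup_le fun i => ?_
    by_cases h : j = i
    · subst h; rw [if_pos rfl]
    · rw [if_neg h]; exact bot_le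

theorem QMod.copair_ext {M X : QMod.{u, u} A} (w w' : QMod.PMod ι M ⟶ X)
    (h : ∀ i, QMod.inj M i ≫ w = QMod.inj M i ≫ w') : w = w' := by
  apply Subtype.ext; funext v
  have hv := QMod.decomp (ι := ι) (M := M) v
  calc w.1 v = w.1 (⨆ i, (QMod.inj M i).1 (v i)) := by rw [← hv]
    _ = ⨆ i, w.1 ((QMod.inj M i).1 (v i)) := QMod.hom_iSup w _
    _ = ⨆ i, w'.1 ((QMod.inj M i).1 (v i)) := by
        refine iSup_congr fun i => ?_
        exact congrFun (congrArg Subtype.val (h i)) (v i)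
    _ = w'.1 (⨆ i, (QMod.inj M i).1 (v i)) := (QMod.hom_iSup w' _).symm
    _ = w'.1 v := by rw [← hv]

/-- The diagonal. -/
def QMod.diag (M : QMod.{u, u} A) : M ⟶ QMod.PMod ι M := QMod.pair (fun _ => 𝟙 M)

theorem QMod.diag_proj (M : QMod.{u, u} A) (i : ι) :
    QMod.diag (ι := ι) M ≫ QMod.proj M i = 𝟙 M := rfl

theorem QMod.iSup_eq_diag_copair {M N : QMod.{u, u} A} (u : ι → (M ⟶ N)) :
    (⨆ i, u i) = QMod.diag (ι := ι) M ≫ QMod.copair u := by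
  apply Subtype.ext; funext m
  rw [QMod.iSup_hom_apply]
  rfl

theorem QMod.inj_proj_same (M : QMod.{u, u} A) (i : ι) :
    QMod.inj M i ≫ QMod.proj M i = 𝟙 M := by
  classical
  apply Subtype.ext; funext m
  show (if i = i then m else ⊥) = m
  rw [if_pos rfl]

theorem QMod.inj_proj_ne (M : QMod.{u, u} A) {i j : ι} (h : i ≠ j) :
    QMod.inj M i ≫ QMod.proj M j = QMod.zeroHom M M := by
  classical
  apply Subtype.ext; funext m
  show (if j = i then m else ⊥) = ⊥
  rw [if_neg (Ne.symm h)]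

end Biproduct
section Transport
open QMod

variable {A B : Type u} [UQuantale A] [UQuantale B]
variable (e : QMod.{u, u} A ≌ QMod.{u, u} B)

theorem hom_fz_subsingleton {X : QMod.{u, u} B}
    (k k' : e.functor.obj (QMod.ZMod A) ⟶ X) : k = k' := by
  apply e.symm.fullyFaithfulFunctor.map_injective
  have h : e.unit.app (QMod.ZMod A) ≫ e.inverse.map k
      = e.unit.app (QMod.ZMod A) ≫ e.inverse.map k' := QMod.zhom_unique _ _
  exact (Iso.cancel_iso_hom_left (e.unitIso.app (QMod.ZMod A)) _ _).mp h

theorem F_map_zero {M N : QMod.{u, u} A} :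
    e.functor.map (QMod.zeroHom M N) = QMod.zeroHom _ _ := by
  rw [QMod.zeroHom_factor, e.functor.map_comp]
  have h : e.functor.map (QMod.zeroHom (QMod.ZMod A) N)
      = QMod.zeroHom (e.functor.obj (QMod.ZMod A)) (e.functor.obj N) :=
    hom_fz_subsingleton e _ _
  rw [h, QMod.comp_zeroHom]

variable {ι : Type u}

/-- Comparison map from the concrete biproduct to the image of the biproduct. -/
noncomputable def cmpr (M : QMod.{u, u} A) :
    QMod.PMod ι (e.functor.obj M) ⟶ e.functor.obj (QMod.PMod ι M) :=
  QMod.copair (fun i => e.functor.map (QMod.inj M i))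

theorem cmpr_proj (M : QMod.{u, u} A) (i : ι) :
    cmpr e M ≫ e.functor.map (QMod.proj M i) = QMod.proj (e.functor.obj M) i := by
  apply QMod.copair_ext
  intro j
  rw [← Category.assoc, cmpr, QMod.inj_copair, ← e.functor.map_comp]
  by_cases h : j = i
  · subst h
    rw [QMod.inj_proj_same, e.functor.map_id, QMod.inj_proj_same]
  · rw [QMod.inj_proj_ne M h, F_map_zero, QMod.inj_proj_ne _ h]

theorem F_map_diag (M : QMod.{u, u} A) :
    e.functor.map (QMod.diag (ι := ι) M)
      = QMod.diag (e.functor.obj M) ≫ cmpr e M := by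
  set ff := e.fullyFaithfulFunctor
  set x := ff.preimage (QMod.diag (e.functor.obj M) ≫ cmpr e M) with hxdef
  have hx : e.functor.map x = QMod.diag (e.functor.obj M) ≫ cmpr e M :=
    ff.map_preimage _
  have hproj : ∀ i : ι, x ≫ QMod.proj M i = 𝟙 M := by
    intro i
    apply ff.map_injective
    rw [e.functor.map_comp, hx, Category.assoc, cmpr_proj, e.functor.map_id]
    exact QMod.diag_proj _ i
  have hxd : x = QMod.diag (ι := ι) M := by
    rw [QMod.pair_ext x]
    have : (fun i => x ≫ QMod.proj M i) = fun _ : ι => 𝟙 M := funext hproj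
    rw [this]; rfl
  rw [← hxd, hx]

theorem cmpr_copair {M X : QMod.{u, u} A} (u : ι → (M ⟶ X)) :
    cmpr e M ≫ e.functor.map (QMod.copair u)
      = QMod.copair (fun i => e.functor.map (u i)) := by
  apply QMod.copair_ext
  intro i
  rw [← Category.assoc, cmpr, QMod.inj_copair, ← e.functor.map_comp,
    QMod.inj_copair, QMod.inj_copair]

/-- The functor of an equivalence preserves suprema of morphisms. -/
theorem F_map_iSup {M N : QMod.{u, u} A} (u : ι → (M ⟶ N)) :
    e.functor.map (⨆ i, u i) = ⨆ i, e.functor.map (u i) := by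
  rw [QMod.iSup_eq_diag_copair u, e.functor.map_comp, F_map_diag, Category.assoc,
    cmpr_copair, ← QMod.iSup_eq_diag_copair]

end Transport
section Center
open QMod

variable {A B : Type u} [UQuantale A] [UQuantale B]

/-- The regular module. -/
def QMod.regMod (A : Type u) [UQuantale A] : QMod.{u, u} A where
  carrier := A
  act m a := m * a
  act_one := mul_one
  act_mul m a b := (mul_assoc m a b).symm
  sSup_act := UQuantale.sSup_mul
  act_sSup := UQuantale.mul_sSup

/-- Right multiplication by `a`, as a module endomorphism (for commutative `A`). -/
def tau (hA : ∀ a b : A, a * b = b * a) (M : QMod.{u, u} A) (a : A) : M ⟶ M := by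
  refine ⟨fun m => M.act m a, fun s => M.sSup_act s a, fun m b => ?_⟩
  show M.act (M.act m b) a = M.act (M.act m a) b
  rw [← M.act_mul, ← M.act_mul, hA a b]

theorem tau_natural (hA : ∀ a b : A, a * b = b * a) {M N : QMod.{u, u} A}
    (h : M ⟶ N) (a : A) : h ≫ tau hA N a = tau hA M a ≫ h :=
  Subtype.ext (funext fun m => (h.2.2 m a).symm)

theorem tau_one (hA : ∀ a b : A, a * b = b * a) (M : QMod.{u, u} A) :
    tau hA M 1 = 𝟙 M := Subtype.ext (funext M.act_one)

theorem tau_mul (hA : ∀ a b : A, a * b = b * a) (M : QMod.{u, u} A) (a b : A) :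
    tau hA M (a * b) = tau hA M a ≫ tau hA M b :=
  Subtype.ext (funext fun m => M.act_mul m a b)

theorem tau_sSup (hA : ∀ a b : A, a * b = b * a) (M : QMod.{u, u} A) (s : Set A) :
    tau hA M (sSup s) = ⨆ a : s, tau hA M a.1 := by
  apply Subtype.ext; funext m
  rw [QMod.iSup_hom_apply]
  show M.act m (sSup s) = ⨆ a : s, M.act m a.1
  rw [M.act_sSup m s, iSup_subtype']

variable (e : QMod.{u, u} A ≌ QMod.{u, u} B)

/-- The transported central endomorphism. -/
def theta (hA : ∀ a b : A, a * b = b * a) (a : A) (N : QMod.{u, u} B) : N ⟶ N :=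
  e.counitIso.inv.app N ≫ e.functor.map (tau hA (e.inverse.obj N) a)
    ≫ e.counitIso.hom.app N

theorem theta_natural (hA : ∀ a b : A, a * b = b * a) (a : A)
    {N N' : QMod.{u, u} B} (h : N ⟶ N') :
    h ≫ theta e hA a N' = theta e hA a N ≫ h := by
  have h1 := e.counitIso.inv.naturality h
  have h2 := e.counitIso.hom.naturality h
  simp only [Functor.id_map, Functor.comp_map] at h1 h2
  unfold theta
  slice_lhs 1 2 => rw [h1]
  slice_lhs 2 3 => rw [← e.functor.map_comp, tau_natural hA (e.inverse.map h) a,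
    e.functor.map_comp]
  slice_lhs 3 4 => rw [h2]
  simp only [Category.assoc]

/-- The underlying map of the transported iso. -/
noncomputable def phi (hA : ∀ a b : A, a * b = b * a) : A → B :=
  fun a => (theta e hA a (QMod.regMod B)).1 (1 : B)

theorem theta_apply (hA : ∀ a b : A, a * b = b * a) (a : A)
    (N : QMod.{u, u} B) (n : N.carrier) :
    (theta e hA a N).1 n = N.act n (phi e hA a) := by
  let hn : QMod.regMod B ⟶ N :=
    ⟨fun x => N.act n x, fun s => N.act_sSup n s, fun x b => N.act_mul n x b⟩
  have h := congrArg Subtype.val (theta_natural e hA a hn)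
  have h1 : (theta e hA a N).1 (N.act n (1 : B))
      = N.act n ((theta e hA a (QMod.regMod B)).1 (1 : B)) := congrFun h (1 : B)
  calc (theta e hA a N).1 n = (theta e hA a N).1 (N.act n 1) := by rw [N.act_one]
    _ = N.act n (phi e hA a) := h1

theorem phi_one (hA : ∀ a b : A, a * b = b * a) : phi e hA 1 = 1 := by
  have h : theta e hA 1 (QMod.regMod B) = 𝟙 (QMod.regMod B) := by
    unfold theta
    rw [tau_one, e.functor.map_id]
    simp
  show (theta e hA 1 (QMod.regMod B)).1 (1 : B) = (1 : B)
  rw [h]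
  rfl

theorem theta_comp (hA : ∀ a b : A, a * b = b * a) (a b : A) (N : QMod.{u, u} B) :
    theta e hA (a * b) N = theta e hA a N ≫ theta e hA b N := by
  unfold theta
  rw [tau_mul, e.functor.map_comp]
  slice_rhs 3 4 => rw [Iso.hom_inv_id_app]
  exact Subtype.ext rfl

theorem phi_mul (hA : ∀ a b : A, a * b = b * a) (a b : A) :
    phi e hA (a * b) = phi e hA a * phi e hA b := by
  show (theta e hA (a * b) (QMod.regMod B)).1 (1 : B) = _
  rw [theta_comp]
  show (theta e hA b (QMod.regMod B)).1 ((theta e hA a (QMod.regMod B)).1 (1 : B)) = _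
  rw [theta_apply e hA b]
  rfl

theorem phi_sSup (hA : ∀ a b : A, a * b = b * a) (s : Set A) :
    phi e hA (sSup s) = ⨆ a ∈ s, phi e hA a := by
  have h1 : theta e hA (sSup s) (QMod.regMod B)
      = ⨆ a : s, theta e hA a.1 (QMod.regMod B) := by
    unfold theta
    rw [tau_sSup, F_map_iSup e, QMod.iSup_comp, QMod.comp_iSup]
  show (theta e hA (sSup s) (QMod.regMod B)).1 (1 : B) = _
  erw [h1, QMod.iSup_hom_apply, iSup_subtype']
  rfl

end Center
section Inverse
open QMod

variable {A B : Type u} [UQuantale A] [UQuantale B]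
variable (e : QMod.{u, u} A ≌ QMod.{u, u} B)

theorem theta_symm (hA : ∀ a b : A, a * b = b * a) (hB : ∀ a b : B, a * b = b * a)
    (a : A) (M : QMod.{u, u} A) :
    theta e.symm hB (phi e hA a) M = tau hA M a := by
  have key : tau hB (e.functor.obj M) (phi e hA a) = theta e hA a (e.functor.obj M) :=
    Subtype.ext (funext fun n => (theta_apply e hA a _ n).symm)
  have f1 : e.inverse.map (e.counitIso.hom.app (e.functor.obj M))
      = e.unitIso.inv.app (e.inverse.obj (e.functor.obj M)) := by
    have h := e.unit_inverse_comp (e.functor.obj M)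
    calc e.inverse.map (e.counitIso.hom.app (e.functor.obj M))
        = 𝟙 _ ≫ e.inverse.map (e.counitIso.hom.app (e.functor.obj M)) :=
          (Category.id_comp _).symm
      _ = (e.unitIso.inv.app (e.inverse.obj (e.functor.obj M))
            ≫ e.unitIso.hom.app (e.inverse.obj (e.functor.obj M)))
            ≫ e.inverse.map (e.counitIso.hom.app (e.functor.obj M)) := by
          rw [Iso.inv_hom_id_app]; rfl
      _ = e.unitIso.inv.app (e.inverse.obj (e.functor.obj M))
            ≫ (e.unitIso.hom.app (e.inverse.obj (e.functor.obj M))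
              ≫ e.inverse.map (e.counitIso.hom.app (e.functor.obj M))) :=
          Category.assoc _ _ _
      _ = e.unitIso.inv.app (e.inverse.obj (e.functor.obj M)) ≫ 𝟙 _ := by rw [h]; rfl
      _ = e.unitIso.inv.app (e.inverse.obj (e.functor.obj M)) := Category.comp_id _
  have f2 : e.inverse.map (e.counitIso.inv.app (e.functor.obj M))
      = e.unitIso.hom.app (e.inverse.obj (e.functor.obj M)) := by
    have hcomp : e.inverse.map (e.counitIso.inv.app (e.functor.obj M))
        ≫ e.inverse.map (e.counitIso.hom.app (e.functor.obj M)) = 𝟙 _ := by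
      rw [← e.inverse.map_comp, Iso.inv_hom_id_app, e.inverse.map_id]
    rw [f1] at hcomp
    calc e.inverse.map (e.counitIso.inv.app (e.functor.obj M))
        = e.inverse.map (e.counitIso.inv.app (e.functor.obj M)) ≫ 𝟙 _ :=
          (Category.comp_id _).symm
      _ = e.inverse.map (e.counitIso.inv.app (e.functor.obj M))
            ≫ (e.unitIso.inv.app (e.inverse.obj (e.functor.obj M))
              ≫ e.unitIso.hom.app (e.inverse.obj (e.functor.obj M))) := by
          rw [Iso.inv_hom_id_app]; rfl
      _ = (e.inverse.map (e.counitIso.inv.app (e.functor.obj M))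
            ≫ e.unitIso.inv.app (e.inverse.obj (e.functor.obj M)))
            ≫ e.unitIso.hom.app (e.inverse.obj (e.functor.obj M)) :=
          (Category.assoc _ _ _).symm
      _ = 𝟙 _ ≫ e.unitIso.hom.app (e.inverse.obj (e.functor.obj M)) := by rw [hcomp]; rfl
      _ = e.unitIso.hom.app (e.inverse.obj (e.functor.obj M)) := Category.id_comp _
  have f3 : tau hA (e.inverse.obj (e.functor.obj M)) a
        ≫ e.unitIso.hom.app (e.inverse.obj (e.functor.obj M))
      = e.unitIso.hom.app (e.inverse.obj (e.functor.obj M))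
        ≫ e.inverse.map (e.functor.map (tau hA (e.inverse.obj (e.functor.obj M)) a)) := by
    have h := e.unitIso.hom.naturality (tau hA (e.inverse.obj (e.functor.obj M)) a)
    simp only [Functor.id_map, Functor.comp_map] at h
    exact h
  have f4 : e.unitIso.hom.app M ≫ tau hA (e.inverse.obj (e.functor.obj M)) a
      = tau hA M a ≫ e.unitIso.hom.app M :=
    tau_natural hA (e.unitIso.hom.app M) a
  show e.unitIso.hom.app M
      ≫ e.inverse.map (tau hB (e.functor.obj M) (phi e hA a))
      ≫ e.unitIso.inv.app M = tau hA M a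
  rw [key]
  show e.unitIso.hom.app M
      ≫ e.inverse.map (e.counitIso.inv.app (e.functor.obj M)
        ≫ e.functor.map (tau hA (e.inverse.obj (e.functor.obj M)) a)
        ≫ e.counitIso.hom.app (e.functor.obj M))
      ≫ e.unitIso.inv.app M = tau hA M a
  rw [e.inverse.map_comp, e.inverse.map_comp, f1, f2]
  slice_lhs 2 3 => rw [← f3]
  slice_lhs 3 4 => rw [Iso.hom_inv_id_app]
  slice_lhs 1 2 => rw [f4]
  have f5 : e.unitIso.hom.app M
      ≫ 𝟙 ((𝟭 (QMod.{u, u} A)).obj (e.inverse.obj (e.functor.obj M)))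
      ≫ e.unitIso.inv.app M = 𝟙 M := by
    have h1 : 𝟙 ((𝟭 (QMod.{u, u} A)).obj (e.inverse.obj (e.functor.obj M)))
        ≫ e.unitIso.inv.app M = e.unitIso.inv.app M := Category.id_comp _
    rw [h1, Iso.hom_inv_id_app]; rfl
  rw [Category.assoc, Category.assoc, f5, Category.comp_id]

theorem psi_phi (hA : ∀ a b : A, a * b = b * a) (hB : ∀ a b : B, a * b = b * a)
    (a : A) : phi e.symm hB (phi e hA a) = a := by
  show (theta e.symm hB (phi e hA a) (QMod.regMod A)).1 (1 : A) = a
  rw [theta_symm e hA hB a (QMod.regMod A)]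
  exact one_mul a

end Inverse
section Backward
open QMod

variable {A B : Type u} [UQuantale A] [UQuantale B]

/-- Restriction of scalars along a quantale morphism. -/
def restrictObj (h : B → A) (h1 : h 1 = 1) (hm : ∀ x y, h (x * y) = h x * h y)
    (hs : ∀ t : Set B, h (sSup t) = ⨆ b ∈ t, h b) (M : QMod.{u, u} A) :
    QMod.{u, u} B where
  carrier := M.carrier
  latt := M.latt
  act m b := M.act m (h b)
  act_one m := by
    show M.act m (h 1) = m
    rw [h1, M.act_one]
  act_mul m a b := by
    show M.act m (h (a * b)) = M.act (M.act m (h a)) (h b)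
    rw [hm, M.act_mul]
  sSup_act s b := M.sSup_act s (h b)
  act_sSup m t := by
    show M.act m (h (sSup t)) = ⨆ b ∈ t, M.act m (h b)
    rw [hs]
    simp only [QMod.act_iSup]

def restrictFunctor (h : B → A) (h1 : h 1 = 1) (hm : ∀ x y, h (x * y) = h x * h y)
    (hs : ∀ t : Set B, h (sSup t) = ⨆ b ∈ t, h b) :
    QMod.{u, u} A ⥤ QMod.{u, u} B where
  obj := restrictObj h h1 hm hs
  map {M N} f := ⟨f.1, f.2.1, fun m b => f.2.2 m (h b)⟩
  map_id _ := Subtype.ext rfl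
  map_comp _ _ := Subtype.ext rfl

theorem backward (f : A → B) (hf : IsQuantaleIso f) : MoritaEquivalent A B := by
  obtain ⟨hbij, hsup, hone, hmul⟩ := hf
  let fe : A ≃ B := Equiv.ofBijective f hbij
  have hg1 : fe.symm 1 = 1 := by
    have : fe.symm (f 1) = (1 : A) := by
      show fe.symm (fe 1) = 1
      exact fe.symm_apply_apply 1
    rw [← hone]; exact this
  have hfeapp : ∀ a, fe a = f a := fun a => rfl
  have hgf : ∀ a, fe.symm (f a) = a := fun a => fe.symm_apply_apply a
  have hfg : ∀ b, f (fe.symm b) = b := fun b => fe.apply_symm_apply b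
  have hgm : ∀ x y : B, fe.symm (x * y) = fe.symm x * fe.symm y := by
    intro x y
    apply hbij.1
    rw [hfg, hmul, hfg, hfg]
  have hgs : ∀ t : Set B, fe.symm (sSup t) = ⨆ b ∈ t, fe.symm b := by
    intro t
    apply hbij.1
    rw [hfg]
    have h1 : f (⨆ b ∈ t, fe.symm b) = f (sSup (fe.symm '' t)) := by
      rw [sSup_image]
    rw [h1, hsup]
    rw [iSup_image]
    calc sSup t = ⨆ b ∈ t, b := sSup_eq_iSup
      _ = ⨆ b ∈ t, f (fe.symm b) := by
          refine iSup_congr fun b => iSup_congr fun _ => (hfg b).symm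
  -- functors
  let F : QMod.{u, u} A ⥤ QMod.{u, u} B :=
    restrictFunctor fe.symm hg1 hgm hgs
  let G : QMod.{u, u} B ⥤ QMod.{u, u} A :=
    restrictFunctor f hone hmul hsup
  have unitComp : ∀ M : QMod.{u, u} A, ∀ (m : M.carrier) (a : A),
      (G.obj (F.obj M)).act m a = M.act m a := by
    intro M m a
    show M.act m (fe.symm (f a)) = M.act m a
    rw [hgf]
  have counitComp : ∀ N : QMod.{u, u} B, ∀ (n : N.carrier) (b : B),
      (F.obj (G.obj N)).act n b = N.act n b := by
    intro N n b
    show N.act n (f (fe.symm b)) = N.act n b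
    rw [hfg]
  exact ⟨CategoryTheory.Equivalence.mk F G
    (NatIso.ofComponents
      (fun M => ⟨⟨id, fun s => by simp [sSup_eq_iSup]; rfl, fun m a => (unitComp M m a).symm⟩,
        ⟨id, fun s => by simp [sSup_eq_iSup]; rfl, fun m a => unitComp M m a⟩,
        Subtype.ext rfl, Subtype.ext rfl⟩)
      (fun {M N} h => Subtype.ext rfl))
    (NatIso.ofComponents
      (fun N => ⟨⟨id, fun s => by simp [sSup_eq_iSup]; rfl, fun n b => counitComp N n b⟩,
        ⟨id, fun s => by simp [sSup_eq_iSup]; rfl, fun n b => (counitComp N n b).symm⟩,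
        Subtype.ext rfl, Subtype.ext rfl⟩)
      (fun {M N} h => Subtype.ext rfl))⟩

end Backward


/-!
STATEMENT 6: Two commutative quantales are Morita equivalent if and only if
they are isomorphic as quantales.
-/
theorem commutative_morita_iff_iso (A B : Type u) [UQuantale A] [UQuantale B]
    (hA : ∀ a b : A, a * b = b * a) (hB : ∀ a b : B, a * b = b * a) :
    MoritaEquivalent A B ↔ ∃ f : A → B, IsQuantaleIso f := by
  constructor
  · rintro ⟨e⟩
    refine ⟨phi e hA, ?_, phi_sSup e hA, phi_one e hA, phi_mul e hA⟩
    exact Function.bijective_iff_has_inverse.mpr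
      ⟨phi e.symm hB, fun a => psi_phi e hA hB a, fun b => psi_phi e.symm hB hA b⟩
  · rintro ⟨f, hf⟩
    exact backward f hf
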